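/- arXiv:2209.02808 — 11 statements merged into one kernel-verified Lean document; each statement's English description precedes it below -/
import Mathlib

section
/- Let n be an odd positive integer and let x, y : Fin n → ℤ satisfy x j ∈ {−1, 1} and y j ∈ {−1, 1} for all j. Then |Im (∏_{j} ((x j : ℂ) + Complex.I * (y j : ℂ)))| ≤ 2^((n−1)/2). (This is the noncontextual hidden-variable bound 2^{(n−1)/2} of the n-partite MABK inequality: the left-hand side is the value of the MABK expression M_n = (1/2i)[∏(A₁ + iA₂) − ∏(A₁ − iA₂)] under a deterministic ±1 assignment to the observables.) -/
/-- Noncontextual hidden-variable bound of the n-partite MABK inequality: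
any deterministic ±1 assignment gives MABK value of absolute value at most 2^((n-1)/2). -/
theorem mabk_nchv_bound (n : ℕ) (hn : 0 < n) (hodd : Odd n)
    (x y : Fin n → ℤ)
    (hx : ∀ j, x j = -1 ∨ x j = 1) (hy : ∀ j, y j = -1 ∨ y j = 1) :
    |(∏ j, ((x j : ℂ) + Complex.I * (y j : ℂ))).im| ≤ 2 ^ ((n - 1) / 2) := by
  obtain ⟨k, hk⟩ := hodd
  set z := ∏ j, ((x j : ℂ) + Complex.I * (y j : ℂ)) with hz
  -- z² = (∏ 2 xⱼ yⱼ) · Iⁿ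
  have hsq : z ^ 2 = (∏ j, (2 * (x j : ℂ) * (y j : ℂ))) * Complex.I ^ n := by
    rw [hz, ← Finset.prod_pow]
    rw [show Complex.I ^ n = ∏ _j : Fin n, Complex.I by
      simp [Finset.prod_const]]
    rw [← Finset.prod_mul_distrib]
    apply Finset.prod_congr rfl
    intro j _
    have hx2 : ((x j : ℂ)) ^ 2 = 1 := by rcases hx j with h | h <;> simp [h]
    have hy2 : ((y j : ℂ)) ^ 2 = 1 := by rcases hy j with h | h <;> simp [h]
    linear_combination hx2 + (y j : ℂ) ^ 2 * Complex.I_sq - hy2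
  -- (z²).re = 0
  have hIn : Complex.I ^ n = Complex.I ∨ Complex.I ^ n = -Complex.I := by
    rw [hk, pow_add, pow_mul, Complex.I_sq, pow_one]
    rcases Nat.even_or_odd k with h | h
    · left; rw [h.neg_one_pow]; ring
    · right; rw [h.neg_one_pow]; ring
  have hprodreal : (∏ j, (2 * (x j : ℂ) * (y j : ℂ)))
      = Complex.ofReal (∏ j, (2 * (x j : ℝ) * (y j : ℝ))) := by
    rw [Complex.ofReal_prod]
    apply Finset.prod_congr rfl
    intro j _
    norm_cast
  have hre : (z ^ 2).re = 0 := by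
    rcases hIn with h | h <;> rw [hsq, hprodreal, h] <;>
      simp only [Complex.mul_re, Complex.ofReal_re, Complex.ofReal_im,
        Complex.I_re, Complex.I_im, Complex.neg_re, Complex.neg_im,
        mul_zero, zero_mul, mul_one, mul_neg, neg_neg, neg_zero,
        sub_zero, zero_sub]
  have hre2 : z.re ^ 2 = z.im ^ 2 := by
    have : (z ^ 2).re = z.re * z.re - z.im * z.im := by
      rw [sq]; simp [Complex.mul_re]
    nlinarith [this, hre]
  -- |z|² = 2ⁿ
  have hnorm : z.re ^ 2 + z.im ^ 2 = 2 ^ n := by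
    have : Complex.normSq z = 2 ^ n := by
      rw [hz, map_prod]
      rw [show ((2 : ℝ) ^ n) = ∏ _j : Fin n, (2 : ℝ) by simp [Finset.prod_const]]
      apply Finset.prod_congr rfl
      intro j _
      have hx2 : ((x j : ℝ)) ^ 2 = 1 := by rcases hx j with h | h <;> simp [h]
      have hy2 : ((y j : ℝ)) ^ 2 = 1 := by rcases hy j with h | h <;> simp [h]
      simp [Complex.normSq_apply]
      nlinarith [hx2, hy2]
    rw [Complex.normSq_apply] at this
    nlinarith [this]
  -- hence z.im² = 2ⁿ⁻¹
  have hk2 : (n - 1) / 2 = k := by omega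
  have hn1 : n - 1 = 2 * k := by omega
  have him : z.im ^ 2 = 2 ^ (n - 1) := by
    have h2n : (2 : ℝ) ^ n = 2 * 2 ^ (n - 1) := by
      rw [← pow_succ']
      congr 1
      omega
    nlinarith [hre2, hnorm, h2n]
  have himeq : z.im ^ 2 = ((2 : ℝ) ^ ((n - 1) / 2)) ^ 2 := by
    rw [him, ← pow_mul, hk2, hn1]
    ring_nf
  nlinarith [abs_nonneg z.im, sq_abs z.im, himeq,
    pow_pos (by norm_num : (0:ℝ) < 2) ((n - 1) / 2)]
end

section
/- Let n be an odd positive integer and let x, y : Fin n → ℤ satisfy x j ∈ {−1, 1} and y j ∈ {−1, 1} for all j. Then (Im (∏_{j} ((x j : ℂ) + Complex.I * (y j : ℂ))))² = 2^(n−1). That is, every deterministic ±1 assignment yields MABK value exactly +2^{(n−1)/2} or −2^{(n−1)/2}, so the noncontextual bound 2^{(n−1)/2} is attained. -/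
/-- Every deterministic ±1 assignment yields MABK value exactly ±2^((n-1)/2):
the square of the value is exactly 2^(n-1). -/
theorem mabk_nchv_value_sq (n : ℕ) (hn : 0 < n) (hodd : Odd n)
    (x y : Fin n → ℤ)
    (hx : ∀ j, x j = -1 ∨ x j = 1) (hy : ∀ j, y j = -1 ∨ y j = 1) :
    ((∏ j, ((x j : ℂ) + Complex.I * (y j : ℂ))).im) ^ 2 = 2 ^ (n - 1) := by
  set z : ℂ := ∏ j, ((x j : ℂ) + Complex.I * (y j : ℂ)) with hz
  have hxc : ∀ j, ((x j : ℂ)) ^ 2 = 1 := by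
    intro j; rcases hx j with h | h <;> simp [h]
  have hyc : ∀ j, ((y j : ℂ)) ^ 2 = 1 := by
    intro j; rcases hy j with h | h <;> simp [h]
  -- |z|^2 = 2^n
  have hnorm : Complex.normSq z = 2 ^ n := by
    rw [hz, map_prod]
    have h2 : ∀ j : Fin n, Complex.normSq ((x j : ℂ) + Complex.I * (y j : ℂ)) = 2 := by
      intro j
      rcases hx j with h1 | h1 <;> rcases hy j with h2 | h2 <;>
        norm_num [h1, h2, Complex.normSq_apply]
    rw [Finset.prod_congr rfl fun j _ => h2 j]
    simp
  -- z^2 is purely imaginary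
  have hsq : (z ^ 2).re = 0 := by
    have hfac : ∀ j : Fin n,
        ((x j : ℂ) + Complex.I * (y j : ℂ)) ^ 2
          = (2 * Complex.I) * ((x j : ℂ) * (y j : ℂ)) := by
      intro j
      linear_combination hxc j + ((y j : ℂ)) ^ 2 * Complex.I_sq - hyc j
    have hz2 : z ^ 2 = (2 * Complex.I) ^ n * ((∏ j, (x j * y j) : ℤ) : ℂ) := by
      rw [hz, ← Finset.prod_pow, Finset.prod_congr rfl fun j _ => hfac j,
        Finset.prod_mul_distrib, Finset.prod_const, Finset.card_univ, Fintype.card_fin]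
      norm_cast
    obtain ⟨k, hk⟩ := hodd
    have hI : ((2 * Complex.I) ^ n).re = 0 := by
      subst hk
      have hIpow : Complex.I ^ (2 * k + 1) = (-1 : ℂ) ^ k * Complex.I := by
        rw [pow_succ, pow_mul, Complex.I_sq]
      set c : ℝ := (-1) ^ k * 2 ^ (2 * k + 1) with hc
      have hI2 : (2 * Complex.I) ^ (2 * k + 1) = (c : ℂ) * Complex.I := by
        rw [mul_pow, hIpow, hc]
        push_cast
        ring
      simp [hI2]
    rw [hz2, Complex.mul_re, hI, Complex.intCast_im]
    ring
  have hre : z.re ^ 2 = z.im ^ 2 := by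
    rw [sq, Complex.mul_re] at hsq
    nlinarith [hsq]
  have hsum : z.re ^ 2 + z.im ^ 2 = 2 ^ n := by
    rw [← hnorm, Complex.normSq_apply]; ring
  obtain ⟨m, rfl⟩ : ∃ m, n = m + 1 := ⟨n - 1, (Nat.succ_pred_eq_of_pos hn).symm⟩
  simp only [Nat.add_sub_cancel]
  have h2m : (2:ℝ) ^ (m + 1) = 2 * 2 ^ m := by ring
  nlinarith [hre, hsum]
end

section
/- For every n ≥ 1, the MABK operator M_n has exactly two nonzero entries: M_n f g = −Complex.I * 2^(n−1) when f is the constant-0 function and g is the constant-1 function, M_n f g = Complex.I * 2^(n−1) when f is the constant-1 function and g is the constant-0 function, and M_n f g = 0 for all other pairs (f, g). In particular M_n is a rank-2 matrix. -/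
open Matrix BigOperators

noncomputable section

/-- Pauli X matrix. -/
def pauliX : Matrix (Fin 2) (Fin 2) ℂ := !![0, 1; 1, 0]

/-- Pauli Y matrix. -/
def pauliY : Matrix (Fin 2) (Fin 2) ℂ := !![0, -Complex.I; Complex.I, 0]

/-- n-fold tensor (Kronecker) product of a family of 2×2 matrices,
defined entrywise by `T(A) f g = ∏ j, (A j) (f j) (g j)`. -/
def tensor {n : ℕ} (A : Fin n → Matrix (Fin 2) (Fin 2) ℂ) :
    Matrix (Fin n → Fin 2) (Fin n → Fin 2) ℂ :=
  Matrix.of fun f g => ∏ j, A j (f j) (g j)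

/-- The n-partite MABK operator
`M_n = (1/(2i)) (⊗ⱼ (X + iY) − ⊗ⱼ (X − iY))`. -/
def MABK (n : ℕ) : Matrix (Fin n → Fin 2) (Fin n → Fin 2) ℂ :=
  (1 / (2 * Complex.I)) •
    (tensor (fun _ : Fin n => pauliX + Complex.I • pauliY)
      - tensor (fun _ : Fin n => pauliX - Complex.I • pauliY))

/-- The n-qubit GHZ state `(|0…0⟩ + i|1…1⟩)/√2`. -/
def GHZ (n : ℕ) : (Fin n → Fin 2) → ℂ :=
  fun f =>
    if f = fun _ => 0 then 1 / (Real.sqrt 2 : ℂ)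
    else if f = fun _ => 1 then Complex.I / (Real.sqrt 2 : ℂ)
    else 0

/-- The phase-flipped n-qubit GHZ state `(|0…0⟩ − i|1…1⟩)/√2`. -/
def GHZ' (n : ℕ) : (Fin n → Fin 2) → ℂ :=
  fun f =>
    if f = fun _ => 0 then 1 / (Real.sqrt 2 : ℂ)
    else if f = fun _ => 1 then -Complex.I / (Real.sqrt 2 : ℂ)
    else 0

lemma P_apply (a b : Fin 2) : (pauliX + Complex.I • pauliY) a b = if a = 0 ∧ b = 1 then 2 else 0 := by
  fin_cases a <;> fin_cases b <;> norm_num [pauliX, pauliY, Complex.I_mul_I]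

lemma Q_apply (a b : Fin 2) : (pauliX - Complex.I • pauliY) a b = if a = 1 ∧ b = 0 then 2 else 0 := by
  fin_cases a <;> fin_cases b <;> norm_num [pauliX, pauliY, Complex.I_mul_I]

lemma tP {n : ℕ} (f g : Fin n → Fin 2) :
    tensor (fun _ : Fin n => pauliX + Complex.I • pauliY) f g
      = if f = (fun _ => 0) ∧ g = (fun _ => 1) then 2 ^ n else 0 := by
  simp only [tensor, Matrix.of_apply, P_apply]
  by_cases h : f = (fun _ => 0) ∧ g = (fun _ => 1)
  · obtain ⟨hf, hg⟩ := h
    subst hf; subst hg; simp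
  · rw [if_neg h]
    have hex : ∃ j, ¬(f j = 0 ∧ g j = 1) := by
      by_contra hc
      push_neg at hc
      exact h ⟨funext fun j => (hc j).1, funext fun j => (hc j).2⟩
    obtain ⟨j, hj⟩ := hex
    exact Finset.prod_eq_zero (Finset.mem_univ j) (if_neg hj)

lemma tQ {n : ℕ} (f g : Fin n → Fin 2) :
    tensor (fun _ : Fin n => pauliX - Complex.I • pauliY) f g
      = if f = (fun _ => 1) ∧ g = (fun _ => 0) then 2 ^ n else 0 := by
  simp only [tensor, Matrix.of_apply, Q_apply]
  by_cases h : f = (fun _ => 1) ∧ g = (fun _ => 0)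
  · obtain ⟨hf, hg⟩ := h
    subst hf; subst hg; simp
  · rw [if_neg h]
    have hex : ∃ j, ¬(f j = 1 ∧ g j = 0) := by
      by_contra hc
      push_neg at hc
      exact h ⟨funext fun j => (hc j).1, funext fun j => (hc j).2⟩
    obtain ⟨j, hj⟩ := hex
    exact Finset.prod_eq_zero (Finset.mem_univ j) (if_neg hj)

lemma MABK_apply {n : ℕ} (f g : Fin n → Fin 2) :
    MABK n f g = (1 / (2 * Complex.I)) *
      ((if f = (fun _ => 0) ∧ g = (fun _ => 1) then (2:ℂ) ^ n else 0)
        - (if f = (fun _ => 1) ∧ g = (fun _ => 0) then (2:ℂ) ^ n else 0)) := by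
  simp [MABK, tP, tQ]

/-- The MABK operator has exactly two nonzero entries, at
(const 0, const 1) and (const 1, const 0), with values ∓i·2^(n−1);
in particular it is a rank-2 matrix. -/
theorem mabk_entries (n : ℕ) (hn : 1 ≤ n) :
    MABK n (fun _ => 0) (fun _ => 1) = -Complex.I * 2 ^ (n - 1) ∧
    MABK n (fun _ => 1) (fun _ => 0) = Complex.I * 2 ^ (n - 1) ∧
    (∀ f g : Fin n → Fin 2,
      ¬(f = (fun _ => 0) ∧ g = (fun _ => 1)) →
      ¬(f = (fun _ => 1) ∧ g = (fun _ => 0)) →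
      MABK n f g = 0) ∧
    (MABK n).rank = 2 := by
  set c0 : Fin n → Fin 2 := fun _ => 0 with hc0
  set c1 : Fin n → Fin 2 := fun _ => 1 with hc1
  have hne : c0 ≠ c1 := by intro h; have h2 : (0 : Fin 2) = 1 := congrFun h ⟨0, hn⟩; exact absurd h2 (by decide)
  have harith : (1 / (2 * Complex.I)) * 2 ^ n = -Complex.I * 2 ^ (n - 1) := by
    obtain ⟨m, rfl⟩ : ∃ m, n = m + 1 := ⟨n - 1, by omega⟩
    simp only [Nat.add_sub_cancel]
    have := Complex.I_ne_zero
    field_simp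
    ring_nf
    simp [Complex.I_sq]
  have h1 : MABK n c0 c1 = -Complex.I * 2 ^ (n - 1) := by
    rw [MABK_apply, if_pos ⟨rfl, rfl⟩, if_neg (fun h => hne h.1), sub_zero]
    exact harith
  have h2 : MABK n c1 c0 = Complex.I * 2 ^ (n - 1) := by
    rw [MABK_apply, if_neg (fun h => hne h.2), if_pos ⟨rfl, rfl⟩, zero_sub,
      mul_neg, harith]
    ring
  have h0 : ∀ f g : Fin n → Fin 2, ¬(f = c0 ∧ g = c1) → ¬(f = c1 ∧ g = c0) → MABK n f g = 0 := by
    intro f g hfg hgf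
    rw [MABK_apply, if_neg hfg, if_neg hgf, sub_zero, mul_zero]
  refine ⟨h1, h2, h0, ?_⟩
  -- rank
  set a : ℂ := -Complex.I * 2 ^ (n - 1) with ha
  set b : ℂ := Complex.I * 2 ^ (n - 1) with hb
  have ha0 : a ≠ 0 := by
    simp [ha, Complex.I_ne_zero]
  have hb0 : b ≠ 0 := by
    simp [hb, Complex.I_ne_zero]
  have key : ∀ v : (Fin n → Fin 2) → ℂ,
      (MABK n).mulVec v = (v c1) • (a • (Pi.single c0 1 : (Fin n → Fin 2) → ℂ)) + (v c0) • (b • (Pi.single c1 1 : (Fin n → Fin 2) → ℂ)) := by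
    intro v
    funext f
    simp only [Matrix.mulVec, dotProduct, Pi.add_apply, Pi.smul_apply, smul_eq_mul,
      Pi.single_apply]
    by_cases hf0 : f = c0
    · subst hf0
      rw [Finset.sum_eq_single c1]
      · rw [h1]
        simp [hne, Ne.symm hne, a]
        ring
      · intro g _ hg
        rw [h0 _ _ (fun h => hg h.2) (fun h => hne h.1), zero_mul]
      · simp
    · by_cases hf1 : f = c1
      · subst hf1
        rw [Finset.sum_eq_single c0]
        · rw [h2]
          simp [hne, Ne.symm hne, b, hf0]
          ring
        · intro g _ hg
          rw [h0 _ _ (fun h => hne h.1.symm) (fun h => hg h.2), zero_mul]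
        · simp
      · rw [Finset.sum_eq_zero, if_neg hf0, if_neg hf1]
        · ring
        · intro g _
          rw [h0 _ _ (fun h => hf0 h.1) (fun h => hf1 h.1), zero_mul]
  have hrange : LinearMap.range (MABK n).mulVecLin
      = Submodule.span ℂ {(Pi.single c0 1 : (Fin n → Fin 2) → ℂ), (Pi.single c1 1 : (Fin n → Fin 2) → ℂ)} := by
    apply le_antisymm
    · rintro x ⟨v, rfl⟩
      rw [Matrix.mulVecLin_apply, key]
      exact Submodule.add_mem _
        (Submodule.smul_mem _ _ (Submodule.smul_mem _ _ (Submodule.subset_span (by simp))))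
        (Submodule.smul_mem _ _ (Submodule.smul_mem _ _ (Submodule.subset_span (by simp))))
    · rw [Submodule.span_le]
      rintro x (rfl | rfl)
      · refine ⟨(a⁻¹) • (Pi.single c1 1 : (Fin n → Fin 2) → ℂ), ?_⟩
        rw [Matrix.mulVecLin_apply, key]
        simp [Pi.single_apply, Ne.symm hne, hne, smul_smul, inv_mul_cancel₀ ha0]
      · refine ⟨(b⁻¹) • (Pi.single c0 1 : (Fin n → Fin 2) → ℂ), ?_⟩
        rw [Matrix.mulVecLin_apply, key]
        simp [Pi.single_apply, Ne.symm hne, hne, smul_smul, inv_mul_cancel₀ hb0]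
  have hli : LinearIndependent ℂ ![(Pi.single c0 1 : (Fin n → Fin 2) → ℂ), (Pi.single c1 1 : (Fin n → Fin 2) → ℂ)] := by
    rw [LinearIndependent.pair_iff]
    intro s t hst
    constructor
    · have := congrFun hst c0
      simpa [Pi.single_apply, Ne.symm hne] using this
    · have := congrFun hst c1
      simpa [Pi.single_apply, hne] using this
  have hset : ({(Pi.single c0 1 : (Fin n → Fin 2) → ℂ), (Pi.single c1 1 : (Fin n → Fin 2) → ℂ)} : Set ((Fin n → Fin 2) → ℂ))
      = Set.range ![(Pi.single c0 1 : (Fin n → Fin 2) → ℂ), (Pi.single c1 1 : (Fin n → Fin 2) → ℂ)] := by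
    ext x
    simp [Fin.exists_fin_two, or_comm]
  show Module.finrank ℂ (LinearMap.range (MABK n).mulVecLin) = 2
  rw [hrange, hset, finrank_span_eq_card hli]
  simp
end
end

section
/- For every n ≥ 1, the GHZ state is an eigenvector of the MABK operator with eigenvalue 2^(n−1): M_n.mulVec GHZ_n = (2^(n−1) : ℂ) • GHZ_n. Hence the quantum value of the MABK expression on the GHZ state is 2^{n−1}. -/
open Matrix BigOperators

noncomputable section

lemma entryP : ∀ a b : Fin 2,
    (pauliX + Complex.I • pauliY) a b = if a = 0 ∧ b = 1 then 2 else 0 := by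
  intro a b
  fin_cases a <;> fin_cases b <;>
    simp [pauliX, pauliY, Complex.I_mul_I] <;> ring_nf

lemma entryM : ∀ a b : Fin 2,
    (pauliX - Complex.I • pauliY) a b = if a = 1 ∧ b = 0 then 2 else 0 := by
  intro a b
  fin_cases a <;> fin_cases b <;>
    simp [pauliX, pauliY, Complex.I_mul_I] <;> ring_nf

lemma tensorP (n : ℕ) (f g : Fin n → Fin 2) :
    tensor (fun _ : Fin n => pauliX + Complex.I • pauliY) f g
      = if f = (fun _ => 0) ∧ g = (fun _ => 1) then 2 ^ n else 0 := by
  unfold tensor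
  simp only [Matrix.of_apply]
  by_cases h : f = (fun _ => 0) ∧ g = (fun _ => 1)
  · rw [if_pos h, h.1, h.2]
    have h2 : pauliX 0 1 + Complex.I * pauliY 0 1 = 2 := by
      simp [pauliX, pauliY, Complex.I_mul_I]
      norm_num
    simp [h2]
  · rw [if_neg h]
    have : ∃ j, ¬(f j = 0 ∧ g j = 1) := by
      by_contra hc
      push_neg at hc
      exact h ⟨funext fun j => (hc j).1, funext fun j => (hc j).2⟩
    obtain ⟨j, hj⟩ := this
    exact Finset.prod_eq_zero (Finset.mem_univ j) (by rw [entryP]; exact if_neg hj)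

lemma tensorM (n : ℕ) (f g : Fin n → Fin 2) :
    tensor (fun _ : Fin n => pauliX - Complex.I • pauliY) f g
      = if f = (fun _ => 1) ∧ g = (fun _ => 0) then 2 ^ n else 0 := by
  unfold tensor
  simp only [Matrix.of_apply]
  by_cases h : f = (fun _ => 1) ∧ g = (fun _ => 0)
  · rw [if_pos h, h.1, h.2]
    have h2 : pauliX 1 0 - Complex.I * pauliY 1 0 = 2 := by
      simp [pauliX, pauliY, Complex.I_mul_I]
      norm_num
    simp [h2]
  · rw [if_neg h]
    have : ∃ j, ¬(f j = 1 ∧ g j = 0) := by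
      by_contra hc
      push_neg at hc
      exact h ⟨funext fun j => (hc j).1, funext fun j => (hc j).2⟩
    obtain ⟨j, hj⟩ := this
    exact Finset.prod_eq_zero (Finset.mem_univ j) (by rw [entryM]; exact if_neg hj)

/-- The GHZ state is an eigenvector of the MABK operator with eigenvalue 2^(n−1). -/
theorem mabk_ghz_eigen (n : ℕ) (hn : 1 ≤ n) :
    (MABK n).mulVec (GHZ n) = (2 ^ (n - 1) : ℂ) • GHZ n := by
  have hne : (fun _ : Fin n => (0 : Fin 2)) ≠ (fun _ => 1) := by
    intro h
    have := congrFun h ⟨0, hn⟩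
    simp at this
  have hs2 : ((Real.sqrt 2 : ℝ) : ℂ) ≠ 0 := by
    norm_cast
    positivity
  have hpow : (2 : ℂ) ^ n = 2 * 2 ^ (n - 1) := by
    conv_lhs => rw [show n = 1 + (n - 1) by omega]
    rw [pow_add, pow_one]
  funext f
  simp only [Matrix.mulVec, dotProduct, MABK, Matrix.smul_apply,
    Matrix.sub_apply, tensorP, tensorM, Pi.smul_apply, smul_eq_mul]
  by_cases hf0 : f = (fun _ => 0)
  · subst hf0
    rw [Finset.sum_eq_single (fun _ => (1 : Fin 2))]
    · simp [GHZ, hne, hne.symm, hpow]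
      field_simp
      ring_nf
      simp [Complex.I_sq]
    · intro g _ hg
      simp [hg, Ne.symm hg, hne]
    · intro h
      exact absurd (Finset.mem_univ _) h
  · by_cases hf1 : f = (fun _ => 1)
    · subst hf1
      rw [Finset.sum_eq_single (fun _ => (0 : Fin 2))]
      · simp [GHZ, hne, hne.symm, hpow]
        field_simp
      · intro g _ hg
        simp [hg, Ne.symm hg, hne.symm]
      · intro h
        exact absurd (Finset.mem_univ _) h
    · have : ∀ g : Fin n → Fin 2,
          (1 / (2 * Complex.I)) *
            ((if f = (fun _ => 0) ∧ g = (fun _ => 1) then (2:ℂ) ^ n else 0)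
              - if f = (fun _ => 1) ∧ g = (fun _ => 0) then (2:ℂ) ^ n else 0) * GHZ n g = 0 := by
        intro g
        simp [hf0, hf1]
      simp only [this, Finset.sum_const_zero]
      simp [GHZ, hf0, hf1]
end
end

section
/- ∑_{k=1}^{16} Π_k = (1/2 : ℂ) • M₃ + (2 : ℂ) • (1 : Matrix (Fin 3 → Fin 2) (Fin 3 → Fin 2) ℂ). (This is the operator identity μ₃ = M₃/2 + 2^{n−2} for n = 3 expressing the contextuality witness μ₃, the sum of the positive-sign projectors in the MABK expansion, in terms of the MABK operator.) -/
open Matrix BigOperators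

noncomputable section

/-- Projector onto the +1 eigenstate of Pauli X. -/
def Ppx : Matrix (Fin 2) (Fin 2) ℂ := (1 / 2 : ℂ) • (1 + pauliX)

/-- Projector onto the −1 eigenstate of Pauli X. -/
def Pmx : Matrix (Fin 2) (Fin 2) ℂ := (1 / 2 : ℂ) • (1 - pauliX)

/-- Projector onto the +1 eigenstate of Pauli Y. -/
def Ppy : Matrix (Fin 2) (Fin 2) ℂ := (1 / 2 : ℂ) • (1 + pauliY)

/-- Projector onto the −1 eigenstate of Pauli Y. -/
def Pmy : Matrix (Fin 2) (Fin 2) ℂ := (1 / 2 : ℂ) • (1 - pauliY)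

/-- The sixteen rank-one projectors Π₁,…,Π₁₆ of the contextuality witness μ₃
(indexed by `Fin 16`, so `Proj3 k` is Π_{k+1}). -/
def Proj3 : Fin 16 → Matrix (Fin 3 → Fin 2) (Fin 3 → Fin 2) ℂ :=
  ![tensor ![Pmy, Ppy, Ppy], tensor ![Pmy, Pmy, Pmy],
    tensor ![Ppy, Ppy, Pmy], tensor ![Ppy, Pmy, Ppy],
    tensor ![Ppy, Ppx, Ppx], tensor ![Ppy, Pmx, Pmx],
    tensor ![Pmy, Ppx, Pmx], tensor ![Pmy, Pmx, Ppx],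
    tensor ![Pmx, Ppy, Pmx], tensor ![Pmx, Pmy, Ppx],
    tensor ![Ppx, Ppy, Ppx], tensor ![Ppx, Pmy, Pmx],
    tensor ![Ppx, Ppx, Ppy], tensor ![Ppx, Pmx, Pmy],
    tensor ![Pmx, Ppx, Pmy], tensor ![Pmx, Pmx, Ppy]]

lemma one22 : (1 : Matrix (Fin 2) (Fin 2) ℂ) = !![1, 0; 0, 1] := by
  ext i j; fin_cases i <;> fin_cases j <;> simp [Matrix.one_apply]

lemma Ppx_eq : Ppx = !![1/2, 1/2; 1/2, 1/2] := by
  ext i j; fin_cases i <;> fin_cases j <;>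
    simp [Ppx, pauliX, one22]

lemma Pmx_eq : Pmx = !![1/2, -(1/2); -(1/2), 1/2] := by
  ext i j; fin_cases i <;> fin_cases j <;>
    simp [Pmx, pauliX, one22]

lemma Ppy_eq : Ppy = !![1/2, -(Complex.I/2); Complex.I/2, 1/2] := by
  ext i j; fin_cases i <;> fin_cases j <;>
    simp [Ppy, pauliY, one22] <;> ring

lemma Pmy_eq : Pmy = !![1/2, Complex.I/2; -(Complex.I/2), 1/2] := by
  ext i j; fin_cases i <;> fin_cases j <;>
    simp [Pmy, pauliY, one22] <;> ring

lemma one_entry (f g : Fin 3 → Fin 2) :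
    (1 : Matrix (Fin 3 → Fin 2) (Fin 3 → Fin 2) ℂ) f g
      = ∏ j, (1 : Matrix (Fin 2) (Fin 2) ℂ) (f j) (g j) := by
  by_cases h : f = g
  · subst h; simp [Matrix.one_apply]
  · obtain ⟨j, hj⟩ := Function.ne_iff.mp h
    rw [Matrix.one_apply_ne h, eq_comm]
    exact Finset.prod_eq_zero (Finset.mem_univ j) (Matrix.one_apply_ne hj)

set_option maxHeartbeats 2000000 in
/-- Operator identity μ₃ = M₃/2 + 2 for the contextuality witness:
the sum of the sixteen positive-sign projectors of the MABK expansion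
equals half the MABK operator plus twice the identity. -/
theorem mu3_eq_MABK3 :
    ∑ k : Fin 16, Proj3 k
      = (1 / 2 : ℂ) • MABK 3
        + (2 : ℂ) • (1 : Matrix (Fin 3 → Fin 2) (Fin 3 → Fin 2) ℂ) := by
  have h2 : ∀ x : Fin 2, x = 0 ∨ x = 1 := by decide
  ext f g
  simp only [Matrix.sum_apply, Matrix.add_apply, Matrix.smul_apply, Matrix.sub_apply,
    Fin.sum_univ_succ, Finset.sum_empty, Finset.univ_eq_empty, one_entry,
    Proj3, MABK, tensor, Matrix.of_apply, Fin.prod_univ_three, one22,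
    Ppx_eq, Pmx_eq, Ppy_eq, Pmy_eq, pauliX, pauliY, Matrix.cons_val_zero, Matrix.cons_val_one,
    Matrix.head_cons, Matrix.cons_val', Matrix.empty_val', Matrix.cons_val_fin_one,
    Matrix.head_fin_const, Matrix.cons_val_succ, smul_eq_mul, Matrix.cons_val_two]
  rcases h2 (f 0) with h0|h0 <;> rcases h2 (f 1) with h1|h1 <;> rcases h2 (f 2) with h3|h3 <;>
    rcases h2 (g 0) with h4|h4 <;> rcases h2 (g 1) with h5|h5 <;> rcases h2 (g 2) with h6|h6 <;>
    simp only [h0, h1, h3, h4, h5, h6, Matrix.cons_val_zero, Matrix.cons_val_one,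
      Matrix.head_cons] <;>
    norm_num [Complex.ext_iff]
end
end

section
/- For each k ∈ {1,…,16}, Π_k.mulVec GHZ'₃ = 0; i.e., the phase-flipped three-qubit GHZ state is annihilated by all sixteen projectors of the contextuality witness μ₃, so μ₃ evaluates to 0 on it. -/
open Matrix BigOperators

noncomputable section

lemma hPpx_col : ∀ x : Fin 2, Ppx x 1 = 1 * Ppx x 0 := by
  intro x; fin_cases x <;> simp [Ppx, pauliX]

lemma hPmx_col : ∀ x : Fin 2, Pmx x 1 = (-1) * Pmx x 0 := by
  intro x; fin_cases x <;> simp [Pmx, pauliX] <;> ring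

lemma hPpy_col : ∀ x : Fin 2, Ppy x 1 = (-Complex.I) * Ppy x 0 := by
  intro x; fin_cases x <;> simp [Ppy, pauliY] <;> ring_nf <;>
    simp [Complex.I_sq] <;> ring

lemma hPmy_col : ∀ x : Fin 2, Pmy x 1 = Complex.I * Pmy x 0 := by
  intro x; fin_cases x <;> simp [Pmy, pauliY] <;> ring_nf <;>
    simp [Complex.I_sq] <;> ring

lemma tensor_mulVec_ghz' (A : Fin 3 → Matrix (Fin 2) (Fin 2) ℂ) (c : Fin 3 → ℂ)
    (h : ∀ j x, A j x 1 = c j * A j x 0) (hc : c 0 * (c 1 * c 2) = -Complex.I) :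
    (tensor A).mulVec (GHZ' 3) = 0 := by
  funext g
  have hne : (fun _ : Fin 3 => (0 : Fin 2)) ≠ (fun _ => 1) := by
    intro h; exact absurd (congrFun h 0) (by simp)
  simp only [mulVec, dotProduct, tensor, of_apply, Pi.zero_apply]
  rw [Fintype.sum_eq_add (fun _ : Fin 3 => (0 : Fin 2)) (fun _ : Fin 3 => (1 : Fin 2)) hne
      (fun f hf => by simp [GHZ', hf.1, hf.2])]
  have h1 : ∏ j, A j (g j) 1 = -Complex.I * ∏ j, A j (g j) 0 := by
    calc ∏ j, A j (g j) 1 = ∏ j, (c j * A j (g j) 0) := by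
          exact Finset.prod_congr rfl fun j _ => h j (g j)
      _ = (∏ j, c j) * ∏ j, A j (g j) 0 := Finset.prod_mul_distrib
      _ = _ := by rw [Fin.prod_univ_three]; linear_combination (∏ j : Fin 3, A j (g j) 0) * hc
  simp only [GHZ', if_pos rfl, if_neg hne.symm, if_neg hne, if_pos rfl, h1, if_true]
  ring_nf
  rw [Complex.I_sq]
  ring

lemma tensor3_ghz' (A B C : Matrix (Fin 2) (Fin 2) ℂ) (a b c : ℂ)
    (hA : ∀ x, A x 1 = a * A x 0) (hB : ∀ x, B x 1 = b * B x 0)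
    (hC : ∀ x, C x 1 = c * C x 0) (habc : a * (b * c) = -Complex.I) :
    (tensor ![A, B, C]).mulVec (GHZ' 3) = 0 := by
  apply tensor_mulVec_ghz' _ ![a, b, c]
  · intro j x; fin_cases j
    · simpa using hA x
    · simpa using hB x
    · simpa using hC x
  · simpa using habc

/-- The phase-flipped three-qubit GHZ state is annihilated by all sixteen
projectors of the contextuality witness μ₃. -/
theorem proj3_annihilates_ghz' :
    ∀ k : Fin 16, (Proj3 k).mulVec (GHZ' 3) = 0 := by
  intro k
  have hI : Complex.I * Complex.I = -1 := Complex.I_mul_I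
  fin_cases k <;> simp only [Proj3] <;>
    [ exact tensor3_ghz' _ _ _ _ _ _ hPmy_col hPpy_col hPpy_col (by
        rw [show (-Complex.I * -Complex.I : ℂ) = -1 by rw [neg_mul_neg, hI]]; ring);
      exact tensor3_ghz' _ _ _ _ _ _ hPmy_col hPmy_col hPmy_col (by
        rw [show (Complex.I * Complex.I : ℂ) = -1 from hI]; ring);
      exact tensor3_ghz' _ _ _ _ _ _ hPpy_col hPpy_col hPmy_col (by
        rw [show (-Complex.I * Complex.I : ℂ) = 1 by rw [neg_mul, hI]; ring]; ring);
      exact tensor3_ghz' _ _ _ _ _ _ hPpy_col hPmy_col hPpy_col (by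
        rw [show (Complex.I * -Complex.I : ℂ) = 1 by rw [mul_neg, hI]; ring]; ring);
      exact tensor3_ghz' _ _ _ _ _ _ hPpy_col hPpx_col hPpx_col (by ring);
      exact tensor3_ghz' _ _ _ _ _ _ hPpy_col hPmx_col hPmx_col (by ring);
      exact tensor3_ghz' _ _ _ _ _ _ hPmy_col hPpx_col hPmx_col (by ring);
      exact tensor3_ghz' _ _ _ _ _ _ hPmy_col hPmx_col hPpx_col (by ring);
      exact tensor3_ghz' _ _ _ _ _ _ hPmx_col hPpy_col hPmx_col (by ring);
      exact tensor3_ghz' _ _ _ _ _ _ hPmx_col hPmy_col hPpx_col (by ring);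
      exact tensor3_ghz' _ _ _ _ _ _ hPpx_col hPpy_col hPpx_col (by ring);
      exact tensor3_ghz' _ _ _ _ _ _ hPpx_col hPmy_col hPmx_col (by ring);
      exact tensor3_ghz' _ _ _ _ _ _ hPpx_col hPpx_col hPpy_col (by ring);
      exact tensor3_ghz' _ _ _ _ _ _ hPpx_col hPmx_col hPmy_col (by ring);
      exact tensor3_ghz' _ _ _ _ _ _ hPmx_col hPpx_col hPmy_col (by ring);
      exact tensor3_ghz' _ _ _ _ _ _ hPmx_col hPmx_col hPpy_col (by ring)]
end
end

section
/- The ℂ-span of the ranges of the sixteen projectors Π₁,…,Π₁₆ (equivalently, the span of the union of the column spaces of the Π_k) equals the subspace {w : (Fin 3 → Fin 2) → ℂ | ∑_f conj(GHZ'₃ f) · w f = 0}, the orthogonal complement of the line spanned by GHZ'₃; in particular this span has ℂ-dimension exactly 7. (Contextuality concentration: the quantum maximum of μ₃ exploits only a 7-dimensional Hilbert space, one less than the 8-dimensional three-qubit space.) -/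
open Matrix BigOperators

noncomputable section

/-! ### Auxiliary material for the proof -/

lemma aux_h01 : (fun _ : Fin 3 => (1 : Fin 2)) ≠ fun _ => 0 := by
  intro h; exact absurd (congrFun h 0) (by simp)

lemma aux_h10 : (fun _ : Fin 3 => (0 : Fin 2)) ≠ fun _ => 1 := fun h => aux_h01 h.symm

lemma aux_ghz'_zero : GHZ' 3 (fun _ => 0) = 1 / (Real.sqrt 2 : ℂ) := by
  rw [GHZ', if_pos rfl]

lemma aux_ghz'_one : GHZ' 3 (fun _ => 1) = -Complex.I / (Real.sqrt 2 : ℂ) := by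
  rw [GHZ', if_neg aux_h01, if_pos rfl]

lemma aux_I3 : Complex.I ^ 3 = -Complex.I := by rw [pow_succ, Complex.I_sq]; ring

lemma aux_sum_ghz' (F : (Fin 3 → Fin 2) → ℂ) :
    ∑ f, (starRingEnd ℂ) (GHZ' 3 f) * F f
      = (1 / (Real.sqrt 2 : ℂ)) * F (fun _ => 0)
        + (Complex.I / (Real.sqrt 2 : ℂ)) * F (fun _ => 1) := by
  rw [Finset.sum_eq_add_of_mem (fun _ => 0) (fun _ => 1) (Finset.mem_univ _) (Finset.mem_univ _)
    aux_h10 (by intro f _ hf; simp [GHZ', hf.1, hf.2]), aux_ghz'_zero, aux_ghz'_one]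
  simp [map_div₀, Complex.conj_I]

/-- The linear functional `w ↦ ⟨GHZ'₃, w⟩`. -/
def phi3 : ((Fin 3 → Fin 2) → ℂ) →ₗ[ℂ] ℂ where
  toFun w := ∑ f, (starRingEnd ℂ) (GHZ' 3 f) * w f
  map_add' w v := by simp [mul_add, Finset.sum_add_distrib]
  map_smul' c w := by
    simp only [Pi.smul_apply, smul_eq_mul, RingHom.id_apply, Finset.mul_sum]
    exact Finset.sum_congr rfl fun _ _ => by ring

lemma phi3_apply (w : (Fin 3 → Fin 2) → ℂ) :
    phi3 w = ∑ f, (starRingEnd ℂ) (GHZ' 3 f) * w f := rfl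

/-- GHZ'₃ is orthogonal to every column of a tensor projector, stated generically. -/
lemma aux_perp_tensor (A B C : Matrix (Fin 2) (Fin 2) ℂ)
    (H : ∀ a b c : Fin 2,
      A 0 a * (B 0 b * C 0 c) + Complex.I * (A 1 a * (B 1 b * C 1 c)) = 0)
    (h : Fin 3 → Fin 2) :
    tensor ![A, B, C] (fun _ => 0) h + Complex.I * tensor ![A, B, C] (fun _ => 1) h = 0 := by
  have e : ∀ f : Fin 3 → Fin 2, tensor ![A, B, C] f h
      = ![A, B, C] 0 (f 0) (h 0) * (![A, B, C] 1 (f 1) (h 1) * (![A, B, C] 2 (f 2) (h 2))) := by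
    intro f
    simp [tensor, Fin.prod_univ_three, mul_assoc]
  rw [e, e]
  exact H (h 0) (h 1) (h 2)

set_option maxHeartbeats 4000000 in
lemma aux_perp (k : Fin 16) (h : Fin 3 → Fin 2) :
    Proj3 k (fun _ => 0) h + Complex.I * Proj3 k (fun _ => 1) h = 0 := by
  fin_cases k <;>
    exact aux_perp_tensor _ _ _
      (by intro a b c; fin_cases a <;> fin_cases b <;> fin_cases c <;>
        simp [Pmy, Ppy, Ppx, Pmx, pauliX, pauliY, Matrix.one_apply] <;>
        (try ring_nf) <;> (try simp [aux_I3]) <;> (try ring)) h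

lemma phi3_proj (k : Fin 16) (v : (Fin 3 → Fin 2) → ℂ) :
    phi3 ((Proj3 k).mulVec v) = 0 := by
  rw [phi3_apply]
  simp only [Matrix.mulVec, dotProduct, Finset.mul_sum]
  rw [Finset.sum_comm]
  apply Finset.sum_eq_zero
  intro h _
  rw [show (∑ f, (starRingEnd ℂ) (GHZ' 3 f) * (Proj3 k f h * v h))
      = (1 / (Real.sqrt 2 : ℂ)) * (Proj3 k (fun _ => 0) h * v h)
        + (Complex.I / (Real.sqrt 2 : ℂ)) * (Proj3 k (fun _ => 1) h * v h) from
    aux_sum_ghz' (fun f => Proj3 k f h * v h)]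
  linear_combination (v h / (Real.sqrt 2 : ℂ)) * aux_perp k h

/-! ### Target vectors and explicit combinations -/

def uvec : (Fin 3 → Fin 2) → ℂ := fun g =>
  if g = fun _ => 0 then 1 else if g = fun _ => 1 then Complex.I else 0

def evec (a b c : Fin 2) : (Fin 3 → Fin 2) → ℂ := fun g => if g = ![a, b, c] then 1 else 0

def col3 (k : Fin 16) : (Fin 3 → Fin 2) → ℂ := fun f => Proj3 k f (fun _ => 0)

lemma col3_mem (k : Fin 16) :
    col3 k ∈ Submodule.span ℂ (⋃ k : Fin 16, Set.range (Proj3 k).mulVec) := by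
  apply Submodule.subset_span
  refine Set.mem_iUnion.2 ⟨k, ⟨Pi.single (fun _ => 0) 1, ?_⟩⟩
  rw [Matrix.mulVec_single]
  funext f; simp [col3]

lemma col3_0 : col3 0 = fun f => tensor ![Pmy, Ppy, Ppy] f (fun _ => 0) := rfl
lemma col3_1 : col3 1 = fun f => tensor ![Pmy, Pmy, Pmy] f (fun _ => 0) := rfl
lemma col3_2 : col3 2 = fun f => tensor ![Ppy, Ppy, Pmy] f (fun _ => 0) := rfl
lemma col3_3 : col3 3 = fun f => tensor ![Ppy, Pmy, Ppy] f (fun _ => 0) := rfl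
lemma col3_4 : col3 4 = fun f => tensor ![Ppy, Ppx, Ppx] f (fun _ => 0) := rfl
lemma col3_6 : col3 6 = fun f => tensor ![Pmy, Ppx, Pmx] f (fun _ => 0) := rfl
lemma col3_8 : col3 8 = fun f => tensor ![Pmx, Ppy, Pmx] f (fun _ => 0) := rfl

section combos

set_option maxHeartbeats 1000000 in
lemma combo_u :
    uvec = (2:ℂ) • col3 0 + (2:ℂ) • col3 1 + (2:ℂ) • col3 2 + (2:ℂ) • col3 3 := by
  rw [col3_0, col3_1, col3_2, col3_3]
  funext f
  obtain ⟨a, b, c, rfl⟩ : ∃ a b c, f = ![a, b, c] :=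
    ⟨f 0, f 1, f 2, by funext i; fin_cases i <;> rfl⟩
  fin_cases a <;> fin_cases b <;> fin_cases c <;>
    simp [uvec, tensor, Fin.prod_univ_three, Pmy, Ppy, Ppx, Pmx, pauliX, pauliY,
      Matrix.one_apply, funext_iff, Fin.forall_fin_succ] <;>
    (try ring_nf) <;> (try simp [aux_I3]) <;> (try ring)

set_option maxHeartbeats 1000000 in
lemma combo_001 :
    evec 0 0 1 = (1 - Complex.I) • col3 0 + (1 + Complex.I) • col3 1
      + (-1 + Complex.I) • col3 2 + (-1 - Complex.I) • col3 3
      + (2:ℂ) • col3 4 + (-2:ℂ) • col3 6 := by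
  rw [col3_0, col3_1, col3_2, col3_3, col3_4, col3_6]
  funext f
  obtain ⟨a, b, c, rfl⟩ : ∃ a b c, f = ![a, b, c] :=
    ⟨f 0, f 1, f 2, by funext i; fin_cases i <;> rfl⟩
  fin_cases a <;> fin_cases b <;> fin_cases c <;>
    simp [evec, tensor, Fin.prod_univ_three, Pmy, Ppy, Ppx, Pmx, pauliX, pauliY,
      Matrix.one_apply, funext_iff, Fin.forall_fin_succ] <;>
    (try ring_nf) <;> (try simp [aux_I3]) <;> (try ring)

set_option maxHeartbeats 1000000 in
lemma combo_010 :
    evec 0 1 0 = (-1 - Complex.I) • col3 0 + (-1 + Complex.I) • col3 1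
      + (-1 - Complex.I) • col3 2 + (-1 + Complex.I) • col3 3
      + (2:ℂ) • col3 4 + (2:ℂ) • col3 6 := by
  rw [col3_0, col3_1, col3_2, col3_3, col3_4, col3_6]
  funext f
  obtain ⟨a, b, c, rfl⟩ : ∃ a b c, f = ![a, b, c] :=
    ⟨f 0, f 1, f 2, by funext i; fin_cases i <;> rfl⟩
  fin_cases a <;> fin_cases b <;> fin_cases c <;>
    simp [evec, tensor, Fin.prod_univ_three, Pmy, Ppy, Ppx, Pmx, pauliX, pauliY,
      Matrix.one_apply, funext_iff, Fin.forall_fin_succ] <;>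
    (try ring_nf) <;> (try simp [aux_I3]) <;> (try ring)

set_option maxHeartbeats 1000000 in
lemma combo_011 :
    evec 0 1 1 = (-1 - Complex.I) • col3 0 + (-1 + Complex.I) • col3 1
      + (1 - 3 * Complex.I) • col3 2 + (1 - Complex.I) • col3 3
      + (2 * Complex.I) • col3 4 + (-2 * Complex.I) • col3 6 + (4 * Complex.I) • col3 8 := by
  rw [col3_0, col3_1, col3_2, col3_3, col3_4, col3_6, col3_8]
  funext f
  obtain ⟨a, b, c, rfl⟩ : ∃ a b c, f = ![a, b, c] :=
    ⟨f 0, f 1, f 2, by funext i; fin_cases i <;> rfl⟩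
  fin_cases a <;> fin_cases b <;> fin_cases c <;>
    simp [evec, tensor, Fin.prod_univ_three, Pmy, Ppy, Ppx, Pmx, pauliX, pauliY,
      Matrix.one_apply, funext_iff, Fin.forall_fin_succ] <;>
    (try ring_nf) <;> (try simp [aux_I3]) <;> (try ring)

set_option maxHeartbeats 1000000 in
lemma combo_100 :
    evec 1 0 0 = (1 + Complex.I) • col3 0 + (-1 + Complex.I) • col3 1
      + (3 - Complex.I) • col3 2 + (1 - Complex.I) • col3 3
      + (-2:ℂ) • col3 4 + (2:ℂ) • col3 6 + (-4:ℂ) • col3 8 := by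
  rw [col3_0, col3_1, col3_2, col3_3, col3_4, col3_6, col3_8]
  funext f
  obtain ⟨a, b, c, rfl⟩ : ∃ a b c, f = ![a, b, c] :=
    ⟨f 0, f 1, f 2, by funext i; fin_cases i <;> rfl⟩
  fin_cases a <;> fin_cases b <;> fin_cases c <;>
    simp [evec, tensor, Fin.prod_univ_three, Pmy, Ppy, Ppx, Pmx, pauliX, pauliY,
      Matrix.one_apply, funext_iff, Fin.forall_fin_succ] <;>
    (try ring_nf) <;> (try simp [aux_I3]) <;> (try ring)

set_option maxHeartbeats 1000000 in
lemma combo_101 :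
    evec 1 0 1 = (1 + Complex.I) • col3 0 + (-1 + Complex.I) • col3 1
      + (1 + Complex.I) • col3 2 + (-1 + Complex.I) • col3 3
      + (-2 * Complex.I) • col3 4 + (-2 * Complex.I) • col3 6 := by
  rw [col3_0, col3_1, col3_2, col3_3, col3_4, col3_6]
  funext f
  obtain ⟨a, b, c, rfl⟩ : ∃ a b c, f = ![a, b, c] :=
    ⟨f 0, f 1, f 2, by funext i; fin_cases i <;> rfl⟩
  fin_cases a <;> fin_cases b <;> fin_cases c <;>
    simp [evec, tensor, Fin.prod_univ_three, Pmy, Ppy, Ppx, Pmx, pauliX, pauliY,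
      Matrix.one_apply, funext_iff, Fin.forall_fin_succ] <;>
    (try ring_nf) <;> (try simp [aux_I3]) <;> (try ring)

set_option maxHeartbeats 1000000 in
lemma combo_110 :
    evec 1 1 0 = (1 - Complex.I) • col3 0 + (-1 - Complex.I) • col3 1
      + (-1 + Complex.I) • col3 2 + (1 + Complex.I) • col3 3
      + (-2 * Complex.I) • col3 4 + (2 * Complex.I) • col3 6 := by
  rw [col3_0, col3_1, col3_2, col3_3, col3_4, col3_6]
  funext f
  obtain ⟨a, b, c, rfl⟩ : ∃ a b c, f = ![a, b, c] :=
    ⟨f 0, f 1, f 2, by funext i; fin_cases i <;> rfl⟩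
  fin_cases a <;> fin_cases b <;> fin_cases c <;>
    simp [evec, tensor, Fin.prod_univ_three, Pmy, Ppy, Ppx, Pmx, pauliX, pauliY,
      Matrix.one_apply, funext_iff, Fin.forall_fin_succ] <;>
    (try ring_nf) <;> (try simp [aux_I3]) <;> (try ring)

end combos

set_option maxHeartbeats 1000000 in
lemma span_eq_ker :
    (Submodule.span ℂ (⋃ k : Fin 16, Set.range (Proj3 k).mulVec) :
        Submodule ℂ ((Fin 3 → Fin 2) → ℂ)) = LinearMap.ker phi3 := by
  set S := (Submodule.span ℂ (⋃ k : Fin 16, Set.range (Proj3 k).mulVec) :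
      Submodule ℂ ((Fin 3 → Fin 2) → ℂ)) with hS
  have hu : uvec ∈ S := by
    rw [combo_u]
    exact Submodule.add_mem _ (Submodule.add_mem _ (Submodule.add_mem _
      (Submodule.smul_mem _ _ (col3_mem 0)) (Submodule.smul_mem _ _ (col3_mem 1)))
      (Submodule.smul_mem _ _ (col3_mem 2))) (Submodule.smul_mem _ _ (col3_mem 3))
  have he001 : evec 0 0 1 ∈ S := by
    rw [combo_001]
    refine Submodule.add_mem _ (Submodule.add_mem _ (Submodule.add_mem _ (Submodule.add_mem _
      (Submodule.add_mem _ ?_ ?_) ?_) ?_) ?_) ?_ <;>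
      exact Submodule.smul_mem _ _ (col3_mem _)
  have he010 : evec 0 1 0 ∈ S := by
    rw [combo_010]
    refine Submodule.add_mem _ (Submodule.add_mem _ (Submodule.add_mem _ (Submodule.add_mem _
      (Submodule.add_mem _ ?_ ?_) ?_) ?_) ?_) ?_ <;>
      exact Submodule.smul_mem _ _ (col3_mem _)
  have he011 : evec 0 1 1 ∈ S := by
    rw [combo_011]
    refine Submodule.add_mem _ (Submodule.add_mem _ (Submodule.add_mem _ (Submodule.add_mem _
      (Submodule.add_mem _ (Submodule.add_mem _ ?_ ?_) ?_) ?_) ?_) ?_) ?_ <;>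
      exact Submodule.smul_mem _ _ (col3_mem _)
  have he100 : evec 1 0 0 ∈ S := by
    rw [combo_100]
    refine Submodule.add_mem _ (Submodule.add_mem _ (Submodule.add_mem _ (Submodule.add_mem _
      (Submodule.add_mem _ (Submodule.add_mem _ ?_ ?_) ?_) ?_) ?_) ?_) ?_ <;>
      exact Submodule.smul_mem _ _ (col3_mem _)
  have he101 : evec 1 0 1 ∈ S := by
    rw [combo_101]
    refine Submodule.add_mem _ (Submodule.add_mem _ (Submodule.add_mem _ (Submodule.add_mem _
      (Submodule.add_mem _ ?_ ?_) ?_) ?_) ?_) ?_ <;>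
      exact Submodule.smul_mem _ _ (col3_mem _)
  have he110 : evec 1 1 0 ∈ S := by
    rw [combo_110]
    refine Submodule.add_mem _ (Submodule.add_mem _ (Submodule.add_mem _ (Submodule.add_mem _
      (Submodule.add_mem _ ?_ ?_) ?_) ?_) ?_) ?_ <;>
      exact Submodule.smul_mem _ _ (col3_mem _)
  apply le_antisymm
  · rw [hS, Submodule.span_le]
    rintro x hx
    rw [Set.mem_iUnion] at hx
    obtain ⟨k, v, rfl⟩ := hx
    exact phi3_proj k v
  · intro w hw
    rw [LinearMap.mem_ker, phi3_apply, aux_sum_ghz'] at hw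
    have hs2 : ((Real.sqrt 2 : ℝ) : ℂ) ≠ 0 := by
      have : (0:ℝ) < Real.sqrt 2 := Real.sqrt_pos.mpr (by norm_num)
      exact_mod_cast this.ne'
    have hw1 : w (fun _ => 1) = Complex.I * w (fun _ => 0) := by
      have h2 : w (fun _ => 0) + Complex.I * w (fun _ => 1) = 0 := by
        field_simp at hw
        linear_combination hw
      linear_combination (-Complex.I) * h2 + (w fun _ => 1) * Complex.I_sq
    have hdecomp : w = w (fun _ => 0) • uvec
        + w ![0,0,1] • evec 0 0 1 + w ![0,1,0] • evec 0 1 0 + w ![0,1,1] • evec 0 1 1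
        + w ![1,0,0] • evec 1 0 0 + w ![1,0,1] • evec 1 0 1 + w ![1,1,0] • evec 1 1 0 := by
      have e000 : (![0,0,0] : Fin 3 → Fin 2) = fun _ => 0 := by funext i; fin_cases i <;> rfl
      have e111 : (![1,1,1] : Fin 3 → Fin 2) = fun _ => 1 := by funext i; fin_cases i <;> rfl
      funext g
      obtain ⟨a, b, c, rfl⟩ : ∃ a b c, g = ![a, b, c] :=
        ⟨g 0, g 1, g 2, by funext i; fin_cases i <;> rfl⟩
      fin_cases a <;> fin_cases b <;> fin_cases c <;>
        simp [uvec, evec, e000, e111, hw1, funext_iff, Fin.forall_fin_succ] <;>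
        (try rw [e000]) <;> (try rw [e111]) <;> (try simp [hw1]) <;> (try ring)
    rw [hdecomp]
    exact Submodule.add_mem _ (Submodule.add_mem _ (Submodule.add_mem _ (Submodule.add_mem _
      (Submodule.add_mem _ (Submodule.add_mem _
        (Submodule.smul_mem _ _ hu) (Submodule.smul_mem _ _ he001))
        (Submodule.smul_mem _ _ he010)) (Submodule.smul_mem _ _ he011))
        (Submodule.smul_mem _ _ he100)) (Submodule.smul_mem _ _ he101))
        (Submodule.smul_mem _ _ he110)

/-- Contextuality concentration: the span of the column spaces of the sixteen
projectors Π₁,…,Π₁₆ is exactly the orthogonal complement of the line spanned by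
the phase-flipped GHZ state, a subspace of ℂ-dimension exactly 7. -/
theorem proj3_span_eq_ghz'_perp :
    ((Submodule.span ℂ (⋃ k : Fin 16, Set.range (Proj3 k).mulVec) :
        Submodule ℂ ((Fin 3 → Fin 2) → ℂ)) : Set ((Fin 3 → Fin 2) → ℂ))
      = {w : (Fin 3 → Fin 2) → ℂ | ∑ f, (starRingEnd ℂ) (GHZ' 3 f) * w f = 0} ∧
    Module.finrank ℂ
      (Submodule.span ℂ (⋃ k : Fin 16, Set.range (Proj3 k).mulVec)) = 7 := by
  have hs2 : ((Real.sqrt 2 : ℝ) : ℂ) ≠ 0 := by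
    have : (0:ℝ) < Real.sqrt 2 := Real.sqrt_pos.mpr (by norm_num)
    exact_mod_cast this.ne'
  constructor
  · rw [span_eq_ker]
    ext w
    simp [LinearMap.mem_ker, phi3_apply]
  · rw [span_eq_ker]
    have hsurj : LinearMap.range phi3 = ⊤ := by
      rw [LinearMap.range_eq_top]
      intro c
      refine ⟨(c * (Real.sqrt 2 : ℂ)) • evec 0 0 0, ?_⟩
      rw [_root_.map_smul, phi3_apply, aux_sum_ghz']
      have e000 : (![0,0,0] : Fin 3 → Fin 2) = fun _ => 0 := by funext i; fin_cases i <;> rfl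
      have h1 : evec 0 0 0 (fun _ => 0) = 1 := by simp [evec, e000]
      have h2 : evec 0 0 0 (fun _ => 1) = 0 := by
        simp only [evec]
        rw [if_neg (by rw [e000]; exact aux_h01)]
      rw [h1, h2]
      field_simp
      rw [smul_eq_mul, mul_zero, add_zero, mul_one_div, mul_div_assoc, div_self hs2, mul_one]
    have h8 : Module.finrank ℂ ((Fin 3 → Fin 2) → ℂ) = 8 := by
      rw [Module.finrank_fintype_fun_eq_card]
      simp [Fintype.card_fun]
    have hrk := LinearMap.finrank_range_add_finrank_ker phi3
    rw [hsurj, h8] at hrk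
    simp [Module.finrank_self] at hrk
    omega
end
end

section
/- ∑_{f,g} conj(GHZ₃ f) · ((∑_{k=1}^{16} Π_k) f g) · (GHZ₃ g) = 4. That is, the three-qubit GHZ state attains the value μ₃ = 4, the quantum maximum (the Lovász number of the associated exclusivity graph), strictly exceeding the noncontextual bound 3. -/
open Matrix BigOperators

noncomputable section

set_option maxHeartbeats 1000000 in
/-- The three-qubit GHZ state attains the quantum maximum μ₃ = 4
(the Lovász number of the exclusivity graph) of the contextuality witness:
⟨GHZ₃| (∑ₖ Πₖ) |GHZ₃⟩ = 4. -/
theorem ghz_attains_mu3_max :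
    ∑ f, ∑ g, (starRingEnd ℂ) (GHZ 3 f) * ((∑ k : Fin 16, Proj3 k) f g) * GHZ 3 g
      = 4 := by
  have hI3 : Complex.I ^ 3 = -Complex.I := by
    simp [pow_succ, Complex.I_mul_I]
  have hne : (fun _ : Fin 3 => (0 : Fin 2)) ≠ fun _ => 1 := by
    intro h; exact absurd (congrFun h 0) (by decide)
  have hres : ∀ F : (Fin 3 → Fin 2) → ℂ,
      (∑ f, (starRingEnd ℂ) (GHZ 3 f) * F f)
        = (starRingEnd ℂ) (GHZ 3 (fun _ => 0)) * F (fun _ => 0)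
          + (starRingEnd ℂ) (GHZ 3 (fun _ => 1)) * F (fun _ => 1) := by
    intro F
    rw [← Finset.sum_subset
      (Finset.subset_univ {(fun _ : Fin 3 => (0 : Fin 2)), fun _ => 1}) ?_]
    · exact Finset.sum_pair hne
    · intro f _ hf
      simp only [Finset.mem_insert, Finset.mem_singleton, not_or] at hf
      simp [GHZ, hf.1, hf.2]
  have hres' : ∀ F : (Fin 3 → Fin 2) → ℂ,
      (∑ g, F g * GHZ 3 g)
        = F (fun _ => 0) * GHZ 3 (fun _ => 0)
          + F (fun _ => 1) * GHZ 3 (fun _ => 1) := by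
    intro F
    rw [← Finset.sum_subset
      (Finset.subset_univ {(fun _ : Fin 3 => (0 : Fin 2)), fun _ => 1}) ?_]
    · exact Finset.sum_pair hne
    · intro f _ hf
      simp only [Finset.mem_insert, Finset.mem_singleton, not_or] at hf
      simp [GHZ, hf.1, hf.2]
  have e00 : (∑ k : Fin 16, Proj3 k) (fun _ => 0) (fun _ => 0) = 2 := by
    simp only [Matrix.sum_apply, Fin.sum_univ_succ, Fin.sum_univ_zero, Proj3, tensor,
      Matrix.of_apply, Fin.prod_univ_succ, Fin.prod_univ_zero,
      Matrix.cons_val', Matrix.cons_val_zero, Matrix.cons_val_one, Matrix.head_cons,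
      Matrix.cons_val_fin_one, Matrix.empty_val', Matrix.cons_val_succ,
      Ppx, Pmx, Ppy, Pmy, pauliX, pauliY, Matrix.smul_apply, Matrix.add_apply,
      Matrix.sub_apply, Matrix.one_apply, smul_eq_mul]
    norm_num
  have e01 : (∑ k : Fin 16, Proj3 k) (fun _ => 0) (fun _ => 1) = -2 * Complex.I := by
    simp only [Matrix.sum_apply, Fin.sum_univ_succ, Fin.sum_univ_zero, Proj3, tensor,
      Matrix.of_apply, Fin.prod_univ_succ, Fin.prod_univ_zero,
      Matrix.cons_val', Matrix.cons_val_zero, Matrix.cons_val_one, Matrix.head_cons,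
      Matrix.cons_val_fin_one, Matrix.empty_val', Matrix.cons_val_succ,
      Ppx, Pmx, Ppy, Pmy, pauliX, pauliY, Matrix.smul_apply, Matrix.add_apply,
      Matrix.sub_apply, Matrix.one_apply, smul_eq_mul]
    norm_num
    ring_nf
    rw [hI3]; ring
  have e10 : (∑ k : Fin 16, Proj3 k) (fun _ => 1) (fun _ => 0) = 2 * Complex.I := by
    simp only [Matrix.sum_apply, Fin.sum_univ_succ, Fin.sum_univ_zero, Proj3, tensor,
      Matrix.of_apply, Fin.prod_univ_succ, Fin.prod_univ_zero,
      Matrix.cons_val', Matrix.cons_val_zero, Matrix.cons_val_one, Matrix.head_cons,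
      Matrix.cons_val_fin_one, Matrix.empty_val', Matrix.cons_val_succ,
      Ppx, Pmx, Ppy, Pmy, pauliX, pauliY, Matrix.smul_apply, Matrix.add_apply,
      Matrix.sub_apply, Matrix.one_apply, smul_eq_mul]
    norm_num
    ring_nf
    rw [hI3]; ring
  have e11 : (∑ k : Fin 16, Proj3 k) (fun _ => 1) (fun _ => 1) = 2 := by
    simp only [Matrix.sum_apply, Fin.sum_univ_succ, Fin.sum_univ_zero, Proj3, tensor,
      Matrix.of_apply, Fin.prod_univ_succ, Fin.prod_univ_zero,
      Matrix.cons_val', Matrix.cons_val_zero, Matrix.cons_val_one, Matrix.head_cons,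
      Matrix.cons_val_fin_one, Matrix.empty_val', Matrix.cons_val_succ,
      Ppx, Pmx, Ppy, Pmy, pauliX, pauliY, Matrix.smul_apply, Matrix.add_apply,
      Matrix.sub_apply, Matrix.one_apply, smul_eq_mul]
    norm_num
  have hG0 : GHZ 3 (fun _ => 0) = 1 / (Real.sqrt 2 : ℂ) := by simp [GHZ]
  have hG1 : GHZ 3 (fun _ => 1) = Complex.I / (Real.sqrt 2 : ℂ) := by
    simp [GHZ, if_neg (Ne.symm hne)]
  have h2 : ((Real.sqrt 2 : ℝ) : ℂ) * ((Real.sqrt 2 : ℝ) : ℂ) = 2 := by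
    rw [← Complex.ofReal_mul, Real.mul_self_sqrt (by norm_num)]; norm_num
  have hs2 : ((Real.sqrt 2 : ℝ) : ℂ) ≠ 0 := by
    intro h
    have := h2
    rw [h] at this
    exact absurd this (by norm_num)
  calc ∑ f, ∑ g, (starRingEnd ℂ) (GHZ 3 f) * ((∑ k : Fin 16, Proj3 k) f g) * GHZ 3 g
      = ∑ f, (starRingEnd ℂ) (GHZ 3 f) *
          ∑ g, ((∑ k : Fin 16, Proj3 k) f g) * GHZ 3 g := by
        refine Finset.sum_congr rfl fun f _ => ?_
        rw [Finset.mul_sum]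
        exact Finset.sum_congr rfl fun g _ => mul_assoc _ _ _
    _ = 4 := by
        rw [hres]
        rw [hres' fun g => (∑ k : Fin 16, Proj3 k) (fun _ => 0) g]
        rw [hres' fun g => (∑ k : Fin 16, Proj3 k) (fun _ => 1) g]
        rw [e00, e01, e10, e11, hG0, hG1]
        simp only [map_div₀, _root_.map_one, Complex.conj_I, Complex.conj_ofReal]
        field_simp
        rw [show ((Real.sqrt 2 : ℝ) : ℂ) ^ 2 = 2 by rw [sq, h2]]
        ring_nf
        rw [Complex.I_sq]
        ring
end
end

section
/- Let s be a subset of {1,…,16} that is an independent set of G₃ (no two elements of s form a pair in E₃). If s contains exactly one element of {1,2,3,4}, exactly one element of {5,6,7,8}, and exactly one element of {9,10,11,12}, then s contains no element of {13,14,15,16}. (This is the Hardy-type logical proof of contextuality: in any noncontextual hidden-variable assignment satisfying the first three normalization conditions, the probability of the fourth group of events is 0, whereas quantum theory predicts 1.) -/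
/-- The 72 edges of the exclusivity graph G₃ (complement of the Shrikhande
graph), as unordered pairs (i,j) with 1 ≤ i < j ≤ 16. -/
def E3 : Finset (ℕ × ℕ) :=
  {(1,2),(1,3),(1,4),(1,5),(1,6),(1,10),(1,12),(1,14),(1,15),(2,3),(2,4),(2,5),
   (2,6),(2,9),(2,11),(2,13),(2,16),(3,4),(3,7),(3,8),(3,10),(3,12),(3,13),
   (3,16),(4,7),(4,8),(4,9),(4,11),(4,14),(4,15),(5,6),(5,7),(5,8),(5,9),
   (5,12),(5,14),(5,16),(6,7),(6,8),(6,10),(6,11),(6,13),(6,15),(7,8),(7,10),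
   (7,11),(7,14),(7,16),(8,9),(8,12),(8,13),(8,15),(9,10),(9,11),(9,12),
   (9,13),(9,14),(10,11),(10,12),(10,13),(10,14),(11,12),(11,15),(11,16),
   (12,15),(12,16),(13,14),(13,15),(13,16),(14,15),(14,16),(15,16)}

/-- Adjacency relation of the graph G₃ on vertices `Fin 16` (1-based in E₃):
i and j are adjacent iff the unordered pair {i+1, j+1} belongs to E₃. -/
def G3Adj (i j : Fin 16) : Prop :=
  (i.val + 1, j.val + 1) ∈ E3 ∨ (j.val + 1, i.val + 1) ∈ E3

instance : DecidablePred fun p : Fin 16 × Fin 16 => G3Adj p.1 p.2 := by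
  intro p; unfold G3Adj; infer_instance

instance (i j : Fin 16) : Decidable (G3Adj i j) := by
  unfold G3Adj; infer_instance

set_option maxRecDepth 100000 in
set_option maxHeartbeats 2000000 in
lemma G3_key4 : ∀ a b c d : Fin 4,
    ¬ G3Adj ⟨a.val, by omega⟩ ⟨b.val + 4, by omega⟩ →
    ¬ G3Adj ⟨a.val, by omega⟩ ⟨c.val + 8, by omega⟩ →
    ¬ G3Adj ⟨b.val + 4, by omega⟩ ⟨c.val + 8, by omega⟩ →
    (G3Adj ⟨a.val, by omega⟩ ⟨d.val + 12, by omega⟩ ∨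
     G3Adj ⟨b.val + 4, by omega⟩ ⟨d.val + 12, by omega⟩ ∨
     G3Adj ⟨c.val + 8, by omega⟩ ⟨d.val + 12, by omega⟩) := by decide

lemma G3_key : ∀ a b c d : Fin 16, a.val < 4 → 4 ≤ b.val → b.val < 8 →
    8 ≤ c.val → c.val < 12 → 12 ≤ d.val →
    ¬ G3Adj a b → ¬ G3Adj a c → ¬ G3Adj b c →
    (G3Adj a d ∨ G3Adj b d ∨ G3Adj c d) := by
  intro a b c d ha hb1 hb2 hc1 hc2 hd
  obtain ⟨av, rfl⟩ : ∃ x : Fin 4, a = ⟨x.val, Nat.lt_of_lt_of_le x.isLt (by norm_num)⟩ :=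
    ⟨⟨a.val, by omega⟩, Fin.ext rfl⟩
  obtain ⟨bv, rfl⟩ : ∃ x : Fin 4, b = ⟨x.val + 4, Nat.lt_of_lt_of_le (Nat.add_lt_add_right x.isLt 4) (by norm_num)⟩ :=
    ⟨⟨b.val - 4, by omega⟩, Fin.ext (by simp; omega)⟩
  obtain ⟨cv, rfl⟩ : ∃ x : Fin 4, c = ⟨x.val + 8, Nat.lt_of_lt_of_le (Nat.add_lt_add_right x.isLt 8) (by norm_num)⟩ :=
    ⟨⟨c.val - 8, by omega⟩, Fin.ext (by simp; omega)⟩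
  obtain ⟨dv, rfl⟩ : ∃ x : Fin 4, d = ⟨x.val + 12, Nat.lt_of_lt_of_le (Nat.add_lt_add_right x.isLt 12) (by norm_num)⟩ :=
    ⟨⟨d.val - 12, by omega⟩, Fin.ext (by simp; omega)⟩
  exact G3_key4 av bv cv dv

/-- Hardy-type logical proof of contextuality: any independent set of G₃
containing exactly one vertex from each of {1,2,3,4}, {5,6,7,8} and
{9,10,11,12} contains no vertex from {13,14,15,16}.
(Vertices of `Fin 16` are 0-based, so the groups are i.val < 4, etc.) -/
theorem G3_hardy_logical_contextuality (s : Finset (Fin 16))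
    (hind : ∀ i ∈ s, ∀ j ∈ s, i ≠ j → ¬ G3Adj i j)
    (h1 : (s.filter (fun i => i.val < 4)).card = 1)
    (h2 : (s.filter (fun i => 4 ≤ i.val ∧ i.val < 8)).card = 1)
    (h3 : (s.filter (fun i => 8 ≤ i.val ∧ i.val < 12)).card = 1) :
    ∀ i ∈ s, i.val < 12 := by
  obtain ⟨a, ha⟩ := Finset.card_eq_one.mp h1
  obtain ⟨b, hb⟩ := Finset.card_eq_one.mp h2
  obtain ⟨c, hc⟩ := Finset.card_eq_one.mp h3
  have haa := Finset.mem_filter.mp (ha ▸ Finset.mem_singleton_self a)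
  have hbb := Finset.mem_filter.mp (hb ▸ Finset.mem_singleton_self b)
  have hcc := Finset.mem_filter.mp (hc ▸ Finset.mem_singleton_self c)
  intro d hd
  by_contra hlt
  push_neg at hlt
  have hab : a ≠ b := by intro h; subst h; omega
  have hac : a ≠ c := by intro h; subst h; omega
  have hbc : b ≠ c := by intro h; subst h; omega
  have had : a ≠ d := by intro h; subst h; omega
  have hbd : b ≠ d := by intro h; subst h; omega
  have hcd : c ≠ d := by intro h; subst h; omega
  have key := G3_key a b c d haa.2 hbb.2.1 hbb.2.2 hcc.2.1 hcc.2.2 hlt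
    (hind a haa.1 b hbb.1 hab) (hind a haa.1 c hcc.1 hac) (hind b hbb.1 c hcc.1 hbc)
  rcases key with h | h | h
  · exact hind a haa.1 d hd had h
  · exact hind b hbb.1 d hd hbd h
  · exact hind c hcc.1 d hd hcd h
end

section
/- Let n ≥ 1 and let C : Fin n → Fin n → Bool satisfy C j k = C k j for all j, k and C j j = false. Then for all j, k : Fin n, Z_k * S_j * Z_k = S_j when j ≠ k, and Z_k * S_k * Z_k = −S_k. (Conjugating a stabilizing operator of a graph state by a local Pauli-Z flips the sign of exactly the stabilizing operator at that site: Z^{(k)} S^{(j)} Z^{(k)} = (1 − 2δ_{jk}) S^{(j)}.) -/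
open Matrix BigOperators

noncomputable section

/-- Pauli Z matrix. -/
def pauliZ : Matrix (Fin 2) (Fin 2) ℂ := !![1, 0; 0, -1]

/-- The stabilizing operator S_j = X^{(j)} ∏ₖ (Z^{(k)})^{C j k} of the graph
state with adjacency matrix C. -/
def stab {n : ℕ} (C : Fin n → Fin n → Bool) (j : Fin n) :
    Matrix (Fin n → Fin 2) (Fin n → Fin 2) ℂ :=
  tensor (fun k => if k = j then pauliX else if C j k then pauliZ else 1)

/-- The local Pauli-Z operator Z_k acting on the k-th qubit. -/
def Zop {n : ℕ} (k : Fin n) :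
    Matrix (Fin n → Fin 2) (Fin n → Fin 2) ℂ :=
  tensor (fun m => if m = k then pauliZ else 1)

lemma pauliZ_off {a b : Fin 2} (h : a ≠ b) : pauliZ a b = 0 := by
  fin_cases a <;> fin_cases b <;> simp_all [pauliZ]

lemma pauliX_diag (a : Fin 2) : pauliX a a = 0 := by
  fin_cases a <;> simp [pauliX]

lemma zz_same (a : Fin 2) : pauliZ a a * pauliZ a a = 1 := by
  fin_cases a <;> norm_num [pauliZ]

lemma zz_diff {a b : Fin 2} (h : a ≠ b) : pauliZ a a * pauliZ b b = -1 := by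
  fin_cases a <;> fin_cases b <;> simp_all [pauliZ]

lemma Zop_apply {n : ℕ} (k : Fin n) (f g : Fin n → Fin 2) :
    Zop k f g = if f = g then pauliZ (f k) (g k) else 0 := by
  unfold Zop tensor
  by_cases h : f = g
  · subst h
    simp only [if_pos rfl, Matrix.of_apply]
    rw [Fintype.prod_eq_single k]
    · simp
    · intro m hm; simp [if_neg hm, Matrix.one_apply]
  · simp only [if_neg h, Matrix.of_apply]
    obtain ⟨m, hm⟩ := Function.ne_iff.mp h
    apply Finset.prod_eq_zero (Finset.mem_univ m)
    by_cases hmk : m = k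
    · subst hmk; simp [pauliZ_off hm]
    · simp [if_neg hmk, Matrix.one_apply, hm]

lemma conj_apply {n : ℕ} (k : Fin n)
    (A : Matrix (Fin n → Fin 2) (Fin n → Fin 2) ℂ) (f g : Fin n → Fin 2) :
    (Zop k * A * Zop k) f g = pauliZ (f k) (f k) * A f g * pauliZ (g k) (g k) := by
  simp [Matrix.mul_apply, Zop_apply, Finset.mul_sum, mul_ite, ite_mul,
    Finset.sum_ite_eq, Finset.sum_ite_eq', mul_comm, mul_assoc, mul_left_comm]

/-- Conjugating a stabilizing operator of a graph state by a local Pauli-Z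
flips the sign of exactly the stabilizing operator at that site:
Z_k S_j Z_k = (1 − 2δ_{jk}) S_j. -/
theorem zop_conj_stab (n : ℕ) (hn : 1 ≤ n) (C : Fin n → Fin n → Bool)
    (hsymm : ∀ j k, C j k = C k j) (hdiag : ∀ j, C j j = false) :
    (∀ j k : Fin n, j ≠ k → Zop k * stab C j * Zop k = stab C j) ∧
    (∀ k : Fin n, Zop k * stab C k * Zop k = -(stab C k)) := by
  constructor
  · intro j k hjk
    ext f g
    rw [conj_apply]
    by_cases hfg : f k = g k
    · rw [hfg, mul_right_comm, zz_same, one_mul]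
    · have h0 : stab C j f g = 0 := by
        unfold stab tensor
        apply Finset.prod_eq_zero (Finset.mem_univ k)
        dsimp only
        rw [if_neg (Ne.symm hjk)]
        by_cases hc : C j k
        · rw [if_pos hc]; exact pauliZ_off hfg
        · rw [if_neg hc]; exact Matrix.one_apply_ne hfg
      rw [h0]; ring
  · intro k
    ext f g
    rw [conj_apply, Matrix.neg_apply]
    by_cases hfg : f k = g k
    · have h0 : stab C k f g = 0 := by
        unfold stab tensor
        apply Finset.prod_eq_zero (Finset.mem_univ k)
        dsimp only
        rw [if_pos rfl, hfg]
        exact pauliX_diag _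
      rw [h0]; ring
    · rw [mul_right_comm, zz_diff hfg]
      ring
end
end

section
/- Let n ≥ 1 and let C : Fin n → Fin n → Bool satisfy C j k = C k j for all j, k and C j j = false. Then the stabilizing operators pairwise commute: S_j * S_k = S_k * S_j for all j, k : Fin n. -/
open Matrix BigOperators

noncomputable section

lemma tensor_mul {n : ℕ} (A B : Fin n → Matrix (Fin 2) (Fin 2) ℂ) :
    tensor A * tensor B = tensor (fun j => A j * B j) := by
  ext f g
  simp only [tensor, Matrix.mul_apply, Matrix.of_apply, ← Finset.prod_mul_distrib]
  rw [Finset.prod_univ_sum]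
  simp [Fintype.piFinset_univ]

lemma XZ_anticomm : pauliX * pauliZ = -(pauliZ * pauliX) := by
  ext i j
  fin_cases i <;> fin_cases j <;>
    simp [pauliX, pauliZ, Matrix.mul_apply, Fin.sum_univ_two]

/-- The stabilizing operators of a graph state pairwise commute. -/
theorem stab_commute (n : ℕ) (hn : 1 ≤ n) (C : Fin n → Fin n → Bool)
    (hsymm : ∀ j k, C j k = C k j) (hdiag : ∀ j, C j j = false) :
    ∀ j k : Fin n, stab C j * stab C k = stab C k * stab C j := by
  intro j k
  by_cases hjk : j = k
  · subst hjk; rfl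
  set Aj : Fin n → Matrix (Fin 2) (Fin 2) ℂ :=
    fun m => if m = j then pauliX else if C j m then pauliZ else 1 with hAj
  set Ak : Fin n → Matrix (Fin 2) (Fin 2) ℂ :=
    fun m => if m = k then pauliX else if C k m then pauliZ else 1 with hAk
  show tensor Aj * tensor Ak = tensor Ak * tensor Aj
  rw [tensor_mul, tensor_mul]
  by_cases hC : C j k = true
  · -- anticommuting case: signs at positions j and k cancel
    have hCk : C k j = true := by rw [← hsymm]; exact hC
    ext f g
    simp only [tensor, Matrix.of_apply]
    have h1 : ∀ m, (Aj m * Ak m) (f m) (g m) =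
        ((if m = j then (-1 : ℂ) else 1) * (if m = k then (-1 : ℂ) else 1)) *
          ((Ak m * Aj m) (f m) (g m)) := by
      intro m
      by_cases hm : m = j
      · subst hm
        have : Aj m = pauliX := by simp [hAj]
        rw [this]
        have : Ak m = pauliZ := by
          simp [hAk, hjk, hCk]
        rw [this]
        rw [XZ_anticomm]
        simp [hjk]
      · by_cases hm' : m = k
        · subst hm'
          have h2 : Ak m = pauliX := by simp [hAk]
          have h3 : Aj m = pauliZ := by simp [hAj, hm, hC]
          rw [h2, h3]
          rw [XZ_anticomm]
          simp [hm]
        · have hcomm : Aj m * Ak m = Ak m * Aj m := by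
            simp only [hAj, hAk, if_neg hm, if_neg hm']
            split_ifs <;> simp
          rw [hcomm, if_neg hm, if_neg hm']
          ring
    calc ∏ m, (Aj m * Ak m) (f m) (g m)
        = ∏ m, ((if m = j then (-1 : ℂ) else 1) * (if m = k then (-1 : ℂ) else 1)) *
            ((Ak m * Aj m) (f m) (g m)) := Finset.prod_congr rfl (fun m _ => h1 m)
      _ = ((∏ m, if m = j then (-1 : ℂ) else 1) * (∏ m, if m = k then (-1 : ℂ) else 1)) *
            ∏ m, (Ak m * Aj m) (f m) (g m) := by
          rw [Finset.prod_mul_distrib, Finset.prod_mul_distrib]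
      _ = ∏ m, (Ak m * Aj m) (f m) (g m) := by
          simp [Finset.prod_ite_eq']
  · -- commuting case: all local factors commute
    have hCk : C k j ≠ true := by rw [← hsymm]; exact hC
    have hfun : (fun m => Aj m * Ak m) = fun m => Ak m * Aj m := by
      funext m
      by_cases hm : m = j
      · subst hm
        have h2 : Ak m = 1 := by simp [hAk, hjk, hCk]
        simp [h2]
      · by_cases hm' : m = k
        · subst hm'
          have h3 : Aj m = 1 := by simp [hAj, hm, hC]
          simp [h3]
        · simp only [hAj, hAk, if_neg hm, if_neg hm']
          split_ifs <;> simp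
    rw [hfun]
end
end
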